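/- For a Borel probability measure μ on [0,∞), the map t ↦ ∫₀^∞ C_μ(-x/t) e^{-x} dx is strictly increasing (when μ ≠ δ_0) and continuous on (0,∞), tends to log μ({0}) as t → 0⁺ (with log 0 = -∞), and tends to 0 as t → ∞. -/

import Mathlib

set_option linter.unusedSectionVars false

open MeasureTheory Set Filter Real Topology

namespace OmegaAux

variable {μ : Measure ℝ} [IsProbabilityMeasure μ]

/-- The moment generating function `s ↦ ∫ e^{su} dμ(u)`. -/
noncomputable def M (μ : Measure ℝ) (s : ℝ) : ℝ := ∫ u, Real.exp (s * u) ∂μ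

lemma ae_nonneg (hμ : μ (Set.Iio 0) = 0) : ∀ᵐ u ∂μ, 0 ≤ u := by
  rw [ae_iff]
  convert hμ using 2
  ext u; simp [not_le]

lemma integrable_exp (h0 : ∀ᵐ u ∂μ, 0 ≤ u) {s : ℝ} (hs : s ≤ 0) :
    Integrable (fun u => Real.exp (s * u)) μ := by
  refine Integrable.mono' (integrable_const 1) ?_ ?_
  · exact (Real.continuous_exp.comp (continuous_const.mul continuous_id)).aestronglyMeasurable
  · filter_upwards [h0] with u hu
    rw [Real.norm_eq_abs, abs_of_pos (Real.exp_pos _)]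
    exact Real.exp_le_one_iff.mpr (mul_nonpos_of_nonpos_of_nonneg hs hu)

lemma M_pos (h0 : ∀ᵐ u ∂μ, 0 ≤ u) {s : ℝ} (hs : s ≤ 0) : 0 < M μ s := by
  rw [M, integral_pos_iff_support_of_nonneg_ae]
  · simp [Function.support, Real.exp_ne_zero]
  · filter_upwards with u using (Real.exp_pos _).le
  · exact integrable_exp h0 hs

lemma M_le_one (h0 : ∀ᵐ u ∂μ, 0 ≤ u) {s : ℝ} (hs : s ≤ 0) : M μ s ≤ 1 := by
  have := integral_mono_ae (integrable_exp h0 hs) (integrable_const 1) ?_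
  · simpa [M] using this
  · filter_upwards [h0] with u hu
    exact Real.exp_le_one_iff.mpr (mul_nonpos_of_nonpos_of_nonneg hs hu)

lemma M_mono (h0 : ∀ᵐ u ∂μ, 0 ≤ u) {s s' : ℝ} (hss : s ≤ s') (hs' : s' ≤ 0) :
    M μ s ≤ M μ s' := by
  refine integral_mono_ae (integrable_exp h0 (hss.trans hs')) (integrable_exp h0 hs') ?_
  filter_upwards [h0] with u hu
  exact Real.exp_le_exp.mpr (mul_le_mul_of_nonneg_right hss hu)

lemma pos_Ioi (hμ : μ (Set.Iio 0) = 0) (hd : μ ≠ Measure.dirac 0) : 0 < μ (Set.Ioi 0) := by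
  rcases eq_or_ne (μ (Set.Ioi 0)) 0 with h | h
  · exfalso
    apply hd
    have hc : μ ({(0:ℝ)}ᶜ) = 0 := by
      have : ({(0:ℝ)}ᶜ : Set ℝ) = Set.Iio 0 ∪ Set.Ioi 0 := by
        ext x; simp [lt_or_lt_iff_ne, eq_comm, ne_comm]
      rw [this]
      exact le_antisymm ((measure_union_le _ _).trans (by simp [hμ, h])) (zero_le)
    ext s hs
    rw [Measure.dirac_apply' _ hs]
    by_cases h0 : (0:ℝ) ∈ s
    · have h1 : μ s + μ ({(0:ℝ)}ᶜ) ≥ μ Set.univ := by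
        refine le_trans (measure_mono ?_) (measure_union_le _ _)
        intro x _; by_cases hx : x = 0
        · exact Or.inl (hx ▸ h0)
        · exact Or.inr hx
      rw [measure_univ, hc, add_zero] at h1
      simpa [Set.indicator_of_mem h0] using le_antisymm prob_le_one h1
    · have : μ s = 0 := measure_mono_null (fun x hx => by
        simp only [Set.mem_compl_iff, Set.mem_singleton_iff]
        rintro rfl; exact h0 hx) hc
      simp [this, Set.indicator_of_notMem h0]
  · exact zero_lt_iff.mpr h

lemma M_strict (h0 : ∀ᵐ u ∂μ, 0 ≤ u) (hIoi : 0 < μ (Set.Ioi 0))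
    {s s' : ℝ} (hss : s < s') (hs' : s' ≤ 0) : M μ s < M μ s' := by
  have hi := integrable_exp h0 (hss.le.trans hs')
  have hi' := integrable_exp h0 hs'
  have key : 0 < ∫ u, (Real.exp (s' * u) - Real.exp (s * u)) ∂μ := by
    rw [integral_pos_iff_support_of_nonneg_ae]
    · refine lt_of_lt_of_le hIoi (measure_mono ?_)
      intro u hu
      simp only [Function.mem_support]
      have : s * u < s' * u := mul_lt_mul_of_pos_right hss hu
      exact sub_ne_zero.mpr (ne_of_gt (Real.exp_lt_exp.mpr this))
    · filter_upwards [h0] with u hu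
      exact sub_nonneg.mpr (Real.exp_le_exp.mpr (mul_le_mul_of_nonneg_right hss.le hu))
    · exact hi'.sub hi
  rw [integral_sub hi' hi] at key
  simpa [M] using sub_pos.mp key

lemma exists_K (hμ : μ (Set.Iio 0) = 0) :
    ∃ K : ℝ, 0 < K ∧ 0 < μ (Set.Icc 0 K) := by
  by_contra h
  push_neg at h
  have hall : ∀ n : ℕ, μ (Set.Icc (0:ℝ) (n+1)) = 0 := fun n =>
    le_antisymm (h (n+1) (by positivity)) (zero_le)
  have : μ Set.univ = 0 := by
    have hsub : (Set.univ : Set ℝ) ⊆ Set.Iio 0 ∪ ⋃ n : ℕ, Set.Icc (0:ℝ) (n+1) := by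
      intro x _
      rcases lt_or_ge x 0 with hx | hx
      · exact Or.inl hx
      · obtain ⟨n, hn⟩ := exists_nat_ge x
        exact Or.inr (Set.mem_iUnion.mpr ⟨n, ⟨hx, hn.trans (by linarith)⟩⟩)
    refine measure_mono_null hsub ?_
    refine measure_union_null hμ (measure_iUnion_null hall)
  simp [measure_univ] at this

lemma M_lower (h0 : ∀ᵐ u ∂μ, 0 ≤ u) {K : ℝ} {s : ℝ} (hs : s ≤ 0) :
    Real.exp (s * K) * (μ (Set.Icc 0 K)).toReal ≤ M μ s := by
  have hi := integrable_exp h0 hs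
  have h1 : ∫ u in Set.Icc (0:ℝ) K, Real.exp (s * u) ∂μ ≤ M μ s := by
    refine setIntegral_le_integral hi ?_
    filter_upwards with u using (Real.exp_pos _).le
  refine le_trans ?_ h1
  have h2 : ∫ u in Set.Icc (0:ℝ) K, Real.exp (s * K) ∂μ ≤
      ∫ u in Set.Icc (0:ℝ) K, Real.exp (s * u) ∂μ := by
    refine setIntegral_mono_on ((integrableOn_const_iff enorm_ne_top).mpr (Or.inr ?_)) (hi.integrableOn)
      measurableSet_Icc ?_
    · exact measure_lt_top μ _
    · intro u hu
      exact Real.exp_le_exp.mpr (mul_le_mul_of_nonpos_left hu.2 hs)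
  refine le_trans ?_ h2
  rw [setIntegral_const, smul_eq_mul, mul_comm, measureReal_def]

lemma M_continuousAt (h0 : ∀ᵐ u ∂μ, 0 ≤ u) {s0 : ℝ} (hs0 : s0 < 0) :
    ContinuousAt (M μ) s0 := by
  refine continuousAt_of_dominated (bound := fun _ => 1) ?_ ?_ (integrable_const 1) ?_
  · filter_upwards with s
    exact (Real.continuous_exp.comp (continuous_const.mul continuous_id)).aestronglyMeasurable
  · filter_upwards [Iio_mem_nhds hs0] with s hs
    filter_upwards [h0] with u hu
    rw [Real.norm_eq_abs, abs_of_pos (Real.exp_pos _)]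
    exact Real.exp_le_one_iff.mpr (mul_nonpos_of_nonpos_of_nonneg (le_of_lt hs) hu)
  · filter_upwards with u
    exact (Real.continuous_exp.comp (continuous_id.mul continuous_const)).continuousAt

lemma M_tendsto_one (h0 : ∀ᵐ u ∂μ, 0 ≤ u) :
    Tendsto (M μ) (nhdsWithin 0 (Set.Iic 0)) (𝓝 1) := by
  have : Tendsto (M μ) (nhdsWithin 0 (Set.Iic 0)) (𝓝 (∫ _u, (1:ℝ) ∂μ)) := by
    refine tendsto_integral_filter_of_dominated_convergence (fun _ => 1) ?_ ?_
      (integrable_const 1) ?_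
    · filter_upwards with s
      exact (Real.continuous_exp.comp (continuous_const.mul continuous_id)).aestronglyMeasurable
    · filter_upwards [self_mem_nhdsWithin] with s hs
      filter_upwards [h0] with u hu
      rw [Real.norm_eq_abs, abs_of_pos (Real.exp_pos _)]
      exact Real.exp_le_one_iff.mpr (mul_nonpos_of_nonpos_of_nonneg hs hu)
    · filter_upwards with u
      have : ContinuousAt (fun s : ℝ => Real.exp (s * u)) 0 :=
        (Real.continuous_exp.comp (continuous_id.mul continuous_const)).continuousAt
      simpa using this.continuousWithinAt.tendsto
  simpa using this

lemma M_tendsto_atBot (h0 : ∀ᵐ u ∂μ, 0 ≤ u) :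
    Tendsto (M μ) atBot (𝓝 (μ {0}).toReal) := by
  have hind : ∫ u, Set.indicator {(0:ℝ)} (fun _ => (1:ℝ)) u ∂μ = (μ {0}).toReal := by
    simpa [measureReal_def] using integral_indicator_one (μ := μ) (measurableSet_singleton (0:ℝ))
  rw [← hind]
  refine tendsto_integral_filter_of_dominated_convergence (fun _ => 1) ?_ ?_
    (integrable_const 1) ?_
  · filter_upwards with s
    exact (Real.continuous_exp.comp (continuous_const.mul continuous_id)).aestronglyMeasurable
  · filter_upwards [Iic_mem_atBot 0] with s hs
    filter_upwards [h0] with u hu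
    rw [Real.norm_eq_abs, abs_of_pos (Real.exp_pos _)]
    exact Real.exp_le_one_iff.mpr (mul_nonpos_of_nonpos_of_nonneg hs hu)
  · filter_upwards [h0] with u hu
    rcases eq_or_lt_of_le hu with h | h
    · simp only [← h, mul_zero, Real.exp_zero]
      simp
    · have h1 : Tendsto (fun s : ℝ => s * u) atBot atBot :=
        Tendsto.atBot_mul_const h tendsto_id
      have h2 : Tendsto (fun s : ℝ => Real.exp (s * u)) atBot (𝓝 0) :=
        Real.tendsto_exp_atBot.comp h1
      have : Set.indicator {(0:ℝ)} (fun _ => (1:ℝ)) u = 0 := by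
        simp [Set.indicator_of_notMem, ne_of_gt h]
      rw [this]
      exact h2

end OmegaAux

open OmegaAux

theorem omega_integral_properties (μ : Measure ℝ) [IsProbabilityMeasure μ]
    (hμ : μ (Set.Iio 0) = 0) :
    (μ ≠ Measure.dirac 0 →
      StrictMonoOn
        (fun t : ℝ => ∫ x in Set.Ioi (0:ℝ),
          Real.log (∫ u, Real.exp ((-x / t) * u) ∂μ) * Real.exp (-x))
        (Set.Ioi 0)) ∧
    ContinuousOn
      (fun t : ℝ => ∫ x in Set.Ioi (0:ℝ),
        Real.log (∫ u, Real.exp ((-x / t) * u) ∂μ) * Real.exp (-x))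
      (Set.Ioi 0) ∧
    (μ {0} = 0 →
      Tendsto
        (fun t : ℝ => ∫ x in Set.Ioi (0:ℝ),
          Real.log (∫ u, Real.exp ((-x / t) * u) ∂μ) * Real.exp (-x))
        (nhdsWithin 0 (Set.Ioi 0)) atBot) ∧
    (μ {0} ≠ 0 →
      Tendsto
        (fun t : ℝ => ∫ x in Set.Ioi (0:ℝ),
          Real.log (∫ u, Real.exp ((-x / t) * u) ∂μ) * Real.exp (-x))
        (nhdsWithin 0 (Set.Ioi 0)) (nhds (Real.log ((μ {0}).toReal)))) ∧
    Tendsto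
      (fun t : ℝ => ∫ x in Set.Ioi (0:ℝ),
        Real.log (∫ u, Real.exp ((-x / t) * u) ∂μ) * Real.exp (-x))
      atTop (nhds 0) := by
  have h0 : ∀ᵐ u ∂μ, 0 ≤ u := ae_nonneg hμ
  obtain ⟨K, hK, hcK⟩ := exists_K hμ
  set c : ℝ := (μ (Set.Icc 0 K)).toReal with hc_def
  have hc : 0 < c := ENNReal.toReal_pos hcK.ne' (measure_ne_top μ _)
  -- bounds for log (M μ s)
  have hlogM_le : ∀ s : ℝ, s ≤ 0 → Real.log (M μ s) ≤ 0 := fun s hs =>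
    Real.log_nonpos (M_pos h0 hs).le (M_le_one h0 hs)
  have hlogM_ge : ∀ s : ℝ, s ≤ 0 → s * K + Real.log c ≤ Real.log (M μ s) := by
    intro s hs
    have h1 : Real.exp (s * K) * c ≤ M μ s := M_lower h0 hs
    calc s * K + Real.log c = Real.log (Real.exp (s * K) * c) := by
          rw [Real.log_mul (Real.exp_ne_zero _) hc.ne', Real.log_exp]
      _ ≤ Real.log (M μ s) := Real.log_le_log (by positivity) h1
  -- the norm bound, uniform for t ≥ τ
  have hnorm : ∀ τ : ℝ, 0 < τ → ∀ t : ℝ, τ ≤ t → ∀ x : ℝ, 0 < x →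
      ‖Real.log (M μ (-x / t)) * Real.exp (-x)‖
        ≤ (K / τ * x - Real.log c) * Real.exp (-x) := by
    intro τ hτ t ht x hx
    have htpos : 0 < t := lt_of_lt_of_le hτ ht
    have hs : -x / t ≤ 0 := div_nonpos_of_nonpos_of_nonneg (by linarith) htpos.le
    have h1 := hlogM_ge _ hs
    have h2 := hlogM_le _ hs
    rw [norm_mul, Real.norm_eq_abs, Real.norm_eq_abs, abs_of_pos (Real.exp_pos _),
      abs_of_nonpos h2]
    have hx_div : x / t ≤ x / τ := div_le_div_of_nonneg_left hx.le hτ ht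
    have : -Real.log (M μ (-x / t)) ≤ K / τ * x - Real.log c := by
      have e1 : -x / t * K = -(x / t * K) := by ring
      have e2 : x / τ * K = K / τ * x := by ring
      have e3 : x / t * K ≤ x / τ * K := mul_le_mul_of_nonneg_right hx_div hK.le
      linarith
    exact mul_le_mul_of_nonneg_right this (Real.exp_pos _).le
  -- integrability of linear-times-exponential bounds
  have hbint : ∀ a b : ℝ,
      IntegrableOn (fun x : ℝ => (a * x + b) * Real.exp (-x)) (Set.Ioi 0) := by
    intro a b
    have h1 : IntegrableOn (fun x : ℝ => x * Real.exp (-x)) (Set.Ioi 0) := by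
      have h := Real.GammaIntegral_convergent (s := 2) (by norm_num)
      refine h.congr_fun ?_ measurableSet_Ioi
      intro x hx
      norm_num [Real.rpow_one, mul_comm]
    have h2 : IntegrableOn (fun x : ℝ => Real.exp (-x)) (Set.Ioi 0) := by
      have := exp_neg_integrableOn_Ioi (0:ℝ) (one_pos)
      refine this.congr_fun ?_ measurableSet_Ioi
      intro x _; norm_num
    have h3 : IntegrableOn (fun x : ℝ => a * (x * Real.exp (-x)) + b * Real.exp (-x))
        (Set.Ioi 0) := (h1.const_mul a).add (h2.const_mul b)
    refine h3.congr_fun ?_ measurableSet_Ioi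
    intro x _; ring
  -- continuity in x and t
  have hcx : ∀ t : ℝ, 0 < t → ∀ x : ℝ, 0 < x →
      ContinuousAt (fun x : ℝ => Real.log (M μ (-x / t))) x := by
    intro t ht x hx
    have hdiv : ContinuousAt (fun x : ℝ => -x / t) x := (continuous_neg.div_const t).continuousAt
    have hs : -x / t < 0 := div_neg_of_neg_of_pos (by linarith) ht
    exact ContinuousAt.comp (g := Real.log) (Real.continuousAt_log (M_pos h0 hs.le).ne')
      (ContinuousAt.comp (g := M μ) (f := fun x : ℝ => -x / t) (M_continuousAt h0 hs) hdiv)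
  have hct : ∀ t : ℝ, 0 < t → ∀ x : ℝ, 0 < x →
      ContinuousAt (fun t : ℝ => Real.log (M μ (-x / t))) t := by
    intro t ht x hx
    have hdiv : ContinuousAt (fun t : ℝ => -x / t) t := by
      exact (continuousAt_const.div continuousAt_id ht.ne')
    have hs : -x / t < 0 := div_neg_of_neg_of_pos (by linarith) ht
    exact ContinuousAt.comp (g := Real.log) (Real.continuousAt_log (M_pos h0 hs.le).ne')
      (ContinuousAt.comp (g := M μ) (f := fun t : ℝ => -x / t) (M_continuousAt h0 hs) hdiv)
  -- integrability of the integrand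
  have hint : ∀ t : ℝ, 0 < t →
      IntegrableOn (fun x : ℝ => Real.log (M μ (-x / t)) * Real.exp (-x)) (Set.Ioi 0) := by
    intro t ht
    have hb := hbint (K / t) (-Real.log c)
    refine Integrable.mono' (by simpa [sub_eq_add_neg, IntegrableOn] using hb) ?_ ?_
    · refine ContinuousOn.aestronglyMeasurable ?_ measurableSet_Ioi
      intro x hx
      exact ((hcx t ht x hx).mul
        (Real.continuous_exp.comp continuous_neg).continuousAt).continuousWithinAt
    · rw [ae_restrict_iff' measurableSet_Ioi]
      filter_upwards with x hx
      simpa [sub_eq_add_neg] using hnorm t ht t le_rfl x hx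
  have hexpint : IntegrableOn (fun x : ℝ => Real.exp (-x)) (Set.Ioi 0) := by
    have := exp_neg_integrableOn_Ioi (0:ℝ) one_pos
    refine this.congr_fun ?_ measurableSet_Ioi
    intro x _; norm_num
  have hdivt : ∀ x : ℝ, 0 < x → Tendsto (fun t : ℝ => -x / t) (𝓝[>] (0:ℝ)) atBot := by
    intro x hx
    have h1 : Tendsto (fun t : ℝ => x / t) (𝓝[>] (0:ℝ)) atTop := by
      have h2 := Tendsto.const_mul_atTop hx (tendsto_inv_nhdsGT_zero (𝕜 := ℝ))
      refine h2.congr fun t => ?_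
      rw [div_eq_mul_inv]
    have h3 := tendsto_neg_atTop_atBot.comp h1
    refine h3.congr fun t => ?_
    simp [Function.comp, neg_div]
  refine ⟨?_, ?_, ?_, ?_, ?_⟩
  · intro hd
    have hIoi := pos_Ioi hμ hd
    show StrictMonoOn (fun t : ℝ => ∫ x in Set.Ioi (0:ℝ),
        Real.log (M μ (-x / t)) * Real.exp (-x)) (Set.Ioi 0)
    intro t1 ht1 t2 ht2 h12
    have ht1' : (0:ℝ) < t1 := ht1
    have ht2' : (0:ℝ) < t2 := ht2
    have hmono : ∀ x : ℝ, 0 < x → -x / t1 < -x / t2 ∧ -x / t2 < 0 := by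
      intro x hx
      constructor
      · rw [div_lt_div_iff₀ ht1' ht2']
        nlinarith
      · exact div_neg_of_neg_of_pos (by linarith) ht2'
    have key : 0 < ∫ x in Set.Ioi (0:ℝ),
        (Real.log (M μ (-x / t2)) * Real.exp (-x)
          - Real.log (M μ (-x / t1)) * Real.exp (-x)) := by
      refine (integral_pos_iff_support_of_nonneg_ae ?_ ?_).mpr ?_
      · rw [EventuallyLE, ae_restrict_iff' measurableSet_Ioi]
        filter_upwards with x hx
        have h := hmono x hx
        have hle : Real.log (M μ (-x / t1)) ≤ Real.log (M μ (-x / t2)) :=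
          Real.log_le_log (M_pos h0 (h.1.le.trans h.2.le)) (M_mono h0 h.1.le h.2.le)
        simp only [Pi.zero_apply]
        exact sub_nonneg.mpr (mul_le_mul_of_nonneg_right hle (Real.exp_pos _).le)
      · exact (hint t2 ht2').sub (hint t1 ht1')
      · have hsub : Set.Ioi (0:ℝ) ⊆ Function.support (fun x =>
            Real.log (M μ (-x / t2)) * Real.exp (-x)
              - Real.log (M μ (-x / t1)) * Real.exp (-x)) := by
          intro x hx
          have hx' : (0:ℝ) < x := hx
          have h := hmono x hx'
          have hstrict : M μ (-x / t1) < M μ (-x / t2) := M_strict h0 hIoi h.1 h.2.le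
          have hlt : Real.log (M μ (-x / t1)) < Real.log (M μ (-x / t2)) :=
            Real.log_lt_log (M_pos h0 (h.1.le.trans h.2.le)) hstrict
          simp only [Function.mem_support]
          exact ne_of_gt (sub_pos.mpr (mul_lt_mul_of_pos_right hlt (Real.exp_pos (-x))))
        calc (0:ENNReal) < volume.restrict (Set.Ioi 0) (Set.Ioi 0) := by
              rw [Measure.restrict_apply_self]
              simp [Real.volume_Ioi]
          _ ≤ _ := measure_mono hsub
    rw [integral_sub (hint t2 ht2') (hint t1 ht1')] at key
    exact sub_pos.mp key
  · show ContinuousOn (fun t : ℝ => ∫ x in Set.Ioi (0:ℝ),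
        Real.log (M μ (-x / t)) * Real.exp (-x)) (Set.Ioi 0)
    intro t0 ht0
    have ht0' : (0:ℝ) < t0 := ht0
    have hhalf : 0 < t0 / 2 := by linarith
    refine ContinuousAt.continuousWithinAt ?_
    refine continuousAt_of_dominated
      (bound := fun x => (K / (t0 / 2) * x - Real.log c) * Real.exp (-x)) ?_ ?_ ?_ ?_
    · filter_upwards [Ioi_mem_nhds (show t0 / 2 < t0 by linarith)] with t ht
      exact (hint t (lt_trans hhalf ht)).aestronglyMeasurable
    · filter_upwards [Ioi_mem_nhds (show t0 / 2 < t0 by linarith)] with t ht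
      rw [ae_restrict_iff' measurableSet_Ioi]
      filter_upwards with x hx
      exact hnorm (t0 / 2) hhalf t (le_of_lt ht) x hx
    · simpa [sub_eq_add_neg, IntegrableOn] using hbint (K / (t0 / 2)) (-Real.log c)
    · rw [ae_restrict_iff' measurableSet_Ioi]
      filter_upwards with x hx
      exact (hct t0 ht0' x hx).mul continuousAt_const
  · intro hμ0
    show Tendsto (fun t : ℝ => ∫ x in Set.Ioi (0:ℝ),
        Real.log (M μ (-x / t)) * Real.exp (-x)) (𝓝[>] 0) atBot
    have hub : ∀ t : ℝ, 0 < t →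
        (∫ x in Set.Ioi (0:ℝ), Real.log (M μ (-x / t)) * Real.exp (-x))
          ≤ Real.log (M μ (-1 / t)) * Real.exp (-1) := by
      intro t ht
      have hs1 : -1 / t < 0 := div_neg_of_neg_of_pos (by norm_num) ht
      have hgint : Integrable (Set.indicator (Set.Ici (1:ℝ))
          (fun x => Real.log (M μ (-1 / t)) * Real.exp (-x)))
          (volume.restrict (Set.Ioi 0)) :=
        (hexpint.const_mul _).indicator measurableSet_Ici
      have hle : (∫ x in Set.Ioi (0:ℝ), Real.log (M μ (-x / t)) * Real.exp (-x))
          ≤ ∫ x in Set.Ioi (0:ℝ), Set.indicator (Set.Ici (1:ℝ))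
              (fun x => Real.log (M μ (-1 / t)) * Real.exp (-x)) x := by
        refine integral_mono_ae (hint t ht) hgint ?_
        rw [EventuallyLE, ae_restrict_iff' measurableSet_Ioi]
        filter_upwards with x hx
        by_cases h1x : x ∈ Set.Ici (1:ℝ)
        · rw [Set.indicator_of_mem h1x]
          have h1x' : (1:ℝ) ≤ x := h1x
          have hsle : -x / t ≤ -1 / t :=
            (div_le_div_iff_of_pos_right ht).mpr (by linarith)
          exact mul_le_mul_of_nonneg_right
            (Real.log_le_log (M_pos h0 (hsle.trans hs1.le)) (M_mono h0 hsle hs1.le))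
            (Real.exp_pos _).le
        · rw [Set.indicator_of_notMem h1x]
          have hsx : -x / t ≤ 0 :=
            (div_neg_of_neg_of_pos (neg_neg_iff_pos.mpr hx) ht).le
          exact mul_nonpos_of_nonpos_of_nonneg (hlogM_le _ hsx) (Real.exp_pos _).le
      refine hle.trans (le_of_eq ?_)
      have hIcap : Set.Ici (1:ℝ) ∩ Set.Ioi 0 = Set.Ici 1 :=
        Set.inter_eq_left.mpr (fun x hx => Set.mem_Ioi.mpr (lt_of_lt_of_le one_pos (Set.mem_Ici.mp hx)))
      rw [integral_indicator measurableSet_Ici, Measure.restrict_restrict measurableSet_Ici,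
        hIcap, integral_const_mul, integral_Ici_eq_integral_Ioi, integral_exp_neg_Ioi]
    have hmaj : Tendsto (fun t : ℝ => Real.log (M μ (-1 / t)) * Real.exp (-1))
        (𝓝[>] 0) atBot := by
      have h1 : Tendsto (fun t : ℝ => M μ (-1 / t)) (𝓝[>] 0) (𝓝 0) := by
        have := (M_tendsto_atBot h0).comp (hdivt 1 one_pos)
        rw [hμ0] at this
        simpa [Function.comp_def] using this
      have h1' : Tendsto (fun t : ℝ => M μ (-1 / t)) (𝓝[>] 0) (𝓝[>] 0) := by
        rw [tendsto_nhdsWithin_iff]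
        refine ⟨h1, ?_⟩
        filter_upwards [self_mem_nhdsWithin] with t ht
        exact M_pos h0 (div_neg_of_neg_of_pos (by norm_num) ht).le
      have h2 := Real.tendsto_log_nhdsGT_zero.comp h1'
      exact Tendsto.atBot_mul_const (Real.exp_pos _) h2
    refine tendsto_atBot_mono' _ ?_ hmaj
    filter_upwards [self_mem_nhdsWithin] with t ht
    exact hub t ht
  · intro hμ0
    set c0 : ℝ := (μ {0}).toReal with hc0_def
    have hc0 : 0 < c0 := ENNReal.toReal_pos hμ0 (measure_ne_top μ _)
    have hMge : ∀ s : ℝ, s ≤ 0 → c0 ≤ M μ s := by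
      intro s hs
      have hind : ∫ u, Set.indicator {(0:ℝ)} (fun _ => (1:ℝ)) u ∂μ = c0 := by
        simpa [measureReal_def, hc0_def] using integral_indicator_one (μ := μ) (measurableSet_singleton (0:ℝ))
      rw [← hind]
      refine integral_mono_ae
        ((integrable_const (1:ℝ)).indicator (measurableSet_singleton 0))
        (integrable_exp h0 hs) ?_
      filter_upwards with u
      by_cases hu : u = 0
      · subst hu; simp
      · simp only [Set.indicator_apply, Set.mem_singleton_iff, hu, if_false]
        exact (Real.exp_pos _).le
    have hlog_bd : ∀ s : ℝ, s ≤ 0 → |Real.log (M μ s)| ≤ -Real.log c0 := by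
      intro s hs
      rw [abs_of_nonpos (hlogM_le s hs)]
      have := Real.log_le_log hc0 (hMge s hs)
      linarith
    show Tendsto (fun t : ℝ => ∫ x in Set.Ioi (0:ℝ),
        Real.log (M μ (-x / t)) * Real.exp (-x)) (𝓝[>] 0) (𝓝 (Real.log c0))
    have h : Tendsto (fun t : ℝ => ∫ x in Set.Ioi (0:ℝ),
        Real.log (M μ (-x / t)) * Real.exp (-x)) (𝓝[>] 0)
        (𝓝 (∫ x in Set.Ioi (0:ℝ), Real.log c0 * Real.exp (-x))) := by
      refine tendsto_integral_filter_of_dominated_convergence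
        (fun x => -Real.log c0 * Real.exp (-x)) ?_ ?_ ?_ ?_
      · filter_upwards [self_mem_nhdsWithin] with t ht
        exact (hint t ht).aestronglyMeasurable
      · filter_upwards [self_mem_nhdsWithin] with t ht
        rw [ae_restrict_iff' measurableSet_Ioi]
        filter_upwards with x hx
        have hs : -x / t ≤ 0 :=
          (div_neg_of_neg_of_pos (neg_neg_iff_pos.mpr hx) ht).le
        rw [norm_mul, Real.norm_eq_abs, Real.norm_eq_abs, abs_of_pos (Real.exp_pos _)]
        exact mul_le_mul_of_nonneg_right (hlog_bd _ hs) (Real.exp_pos _).le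
      · exact hexpint.const_mul _
      · rw [ae_restrict_iff' measurableSet_Ioi]
        filter_upwards with x hx
        have h1 : Tendsto (fun t : ℝ => M μ (-x / t)) (𝓝[>] 0) (𝓝 c0) :=
          (M_tendsto_atBot h0).comp (hdivt x hx)
        have h2 := (Real.continuousAt_log hc0.ne').tendsto.comp h1
        exact h2.mul_const _
    have heq : ∫ x in Set.Ioi (0:ℝ), Real.log c0 * Real.exp (-x) = Real.log c0 := by
      rw [integral_const_mul, integral_exp_neg_Ioi_zero, mul_one]
    rwa [heq] at h
  · show Tendsto (fun t : ℝ => ∫ x in Set.Ioi (0:ℝ),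
        Real.log (M μ (-x / t)) * Real.exp (-x)) atTop (𝓝 0)
    have h : Tendsto (fun t : ℝ => ∫ x in Set.Ioi (0:ℝ),
        Real.log (M μ (-x / t)) * Real.exp (-x)) atTop
        (𝓝 (∫ _x in Set.Ioi (0:ℝ), (0:ℝ))) := by
      refine tendsto_integral_filter_of_dominated_convergence
        (fun x => (K * x - Real.log c) * Real.exp (-x)) ?_ ?_ ?_ ?_
      · filter_upwards [Ici_mem_atTop (1:ℝ)] with t ht
        exact (hint t (lt_of_lt_of_le one_pos ht)).aestronglyMeasurable
      · filter_upwards [Ici_mem_atTop (1:ℝ)] with t ht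
        rw [ae_restrict_iff' measurableSet_Ioi]
        filter_upwards with x hx
        simpa using hnorm 1 one_pos t ht x hx
      · simpa [sub_eq_add_neg, IntegrableOn] using hbint K (-Real.log c)
      · rw [ae_restrict_iff' measurableSet_Ioi]
        filter_upwards with x hx
        have hdiv : Tendsto (fun t : ℝ => -x / t) atTop (𝓝[Set.Iic 0] 0) := by
          rw [tendsto_nhdsWithin_iff]
          constructor
          · exact Tendsto.div_atTop tendsto_const_nhds tendsto_id
          · filter_upwards [Ioi_mem_atTop (0:ℝ)] with t ht
            exact div_nonpos_of_nonpos_of_nonneg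
              (neg_nonpos.mpr (Set.mem_Ioi.mp hx).le) (Set.mem_Ioi.mp ht).le
        have h1 : Tendsto (fun t : ℝ => M μ (-x / t)) atTop (𝓝 1) :=
          (M_tendsto_one h0).comp hdiv
        have h2 : Tendsto (fun t : ℝ => Real.log (M μ (-x / t))) atTop (𝓝 0) := by
          have := (Real.continuousAt_log one_ne_zero).tendsto.comp h1
          simpa [Function.comp_def] using this
        simpa using h2.mul_const (Real.exp (-x))
    simpa using h
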